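/- arXiv:2002.01023 — 5 statements merged into one kernel-verified Lean document; each statement's English description precedes it below -/
import Mathlib

section
/- For the LTI system x(t+1) = A x(t) + B u(t), y(t) = C x(t) + D u(t), any linear combination of the columns of the stacked Hankel matrix [H_L(u); H_L(y)] built from an input/output trajectory (u, y) of length T is again a length-L input/output trajectory of the system. That is, if (ū, ȳ) = [H_L(u); H_L(y)] g for some real vector g, then there exists a state sequence x̄ such that (ū, x̄, ȳ) satisfies the system equations on [0, L−1]. -/
/-- Any linear combination (with coefficient vector `g`) of the columns of the stacked
Hankel matrix `[H_L(u); H_L(y)]` built from a length-`T` input/output trajectory of the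
system `x(t+1) = Ax(t) + Bu(t), y(t) = Cx(t) + Du(t)` is again a length-`L`
input/output trajectory of the system. -/
theorem hankel_comb_is_trajectory (n m p L T : ℕ) (hL : 1 ≤ L) (hLT : L ≤ T)
    (A : Matrix (Fin n) (Fin n) ℝ) (B : Matrix (Fin n) (Fin m) ℝ)
    (C : Matrix (Fin p) (Fin n) ℝ) (D : Matrix (Fin p) (Fin m) ℝ)
    (u : ℕ → Fin m → ℝ) (x : ℕ → Fin n → ℝ) (y : ℕ → Fin p → ℝ)
    (hx : ∀ t, t + 1 < T → x (t + 1) = A.mulVec (x t) + B.mulVec (u t))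
    (hy : ∀ t, t < T → y t = C.mulVec (x t) + D.mulVec (u t))
    (g : Fin (T - L + 1) → ℝ)
    (ubar : ℕ → Fin m → ℝ) (ybar : ℕ → Fin p → ℝ)
    (hubar : ∀ t, t < L → ∀ r, ubar t r = ∑ j : Fin (T - L + 1), g j * u (t + (j : ℕ)) r)
    (hybar : ∀ t, t < L → ∀ r, ybar t r = ∑ j : Fin (T - L + 1), g j * y (t + (j : ℕ)) r) :
    ∃ xbar : ℕ → Fin n → ℝ,
      (∀ t, t + 1 < L → xbar (t + 1) = A.mulVec (xbar t) + B.mulVec (ubar t)) ∧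
      (∀ t, t < L → ybar t = C.mulVec (xbar t) + D.mulVec (ubar t)) := by
  refine ⟨fun t r => ∑ j : Fin (T - L + 1), g j * x (t + (j : ℕ)) r, ?_, ?_⟩
  · intro t ht
    funext r
    have hsum : ∀ (k : ℕ) (M : Matrix (Fin k) (Fin n) ℝ) (s : ℕ) (r : Fin k),
        M.mulVec (fun i => ∑ j : Fin (T - L + 1), g j * x (s + (j : ℕ)) i) r
          = ∑ j : Fin (T - L + 1), g j * M.mulVec (x (s + (j : ℕ))) r := by
      intro k M s r
      simp only [Matrix.mulVec, dotProduct, Finset.mul_sum]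
      rw [Finset.sum_comm]
      exact Finset.sum_congr rfl (fun j _ => by
        exact Finset.sum_congr rfl (fun i _ => by ring))
    have hB : B.mulVec (ubar t) r = ∑ j : Fin (T - L + 1), g j * B.mulVec (u (t + (j : ℕ))) r := by
      have := hubar t (Nat.lt_of_succ_lt ht)
      have hu : ubar t = fun i => ∑ j : Fin (T - L + 1), g j * u (t + (j : ℕ)) i :=
        funext fun i => this i
      rw [hu]
      simp only [Matrix.mulVec, dotProduct, Finset.mul_sum]
      rw [Finset.sum_comm]
      exact Finset.sum_congr rfl (fun j _ => by
        exact Finset.sum_congr rfl (fun i _ => by ring))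
    simp only [Pi.add_apply, hsum n A t r, hB, ← Finset.sum_add_distrib]
    refine Finset.sum_congr rfl (fun j _ => ?_)
    have hjT : t + (j : ℕ) + 1 < T := by
      have hj : (j : ℕ) ≤ T - L := Nat.lt_succ_iff.mp j.isLt
      omega
    have := hx (t + (j : ℕ)) hjT
    have : x (t + 1 + (j : ℕ)) = A.mulVec (x (t + (j : ℕ))) + B.mulVec (u (t + (j : ℕ))) := by
      rw [show t + 1 + (j : ℕ) = t + (j : ℕ) + 1 by ring]; exact this
    rw [this]
    simp [Pi.add_apply]; ring
  · intro t ht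
    funext r
    rw [hybar t ht r]
    have hC : C.mulVec (fun i => ∑ j : Fin (T - L + 1), g j * x (t + (j : ℕ)) i) r
        = ∑ j : Fin (T - L + 1), g j * C.mulVec (x (t + (j : ℕ))) r := by
      simp only [Matrix.mulVec, dotProduct, Finset.mul_sum]
      rw [Finset.sum_comm]
      exact Finset.sum_congr rfl (fun j _ => by
        exact Finset.sum_congr rfl (fun i _ => by ring))
    have hD : D.mulVec (ubar t) r = ∑ j : Fin (T - L + 1), g j * D.mulVec (u (t + (j : ℕ))) r := by
      have hu : ubar t = fun i => ∑ j : Fin (T - L + 1), g j * u (t + (j : ℕ)) i :=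
        funext fun i => hubar t ht i
      rw [hu]
      simp only [Matrix.mulVec, dotProduct, Finset.mul_sum]
      rw [Finset.sum_comm]
      exact Finset.sum_congr rfl (fun j _ => by
        exact Finset.sum_congr rfl (fun i _ => by ring))
    simp only [Pi.add_apply, hC, hD, ← Finset.sum_add_distrib]
    refine Finset.sum_congr rfl (fun j _ => ?_)
    have hjT : t + (j : ℕ) < T := by
      have hj : (j : ℕ) ≤ T - L := Nat.lt_succ_iff.mp j.isLt
      omega
    rw [hy (t + (j : ℕ)) hjT]
    simp [Pi.add_apply]; ring
end

section
/- Let (u, x) be an input/state trajectory of x(t+1) = Ax(t) + Bu(t) on {0,...,T−1}, and suppose the row vector [ξ η] (with ξ ∈ ℝ^{1×n}, η ∈ ℝ^{1×mL}) lies in the left kernel of [H_1(x_{[0,T−L]}); H_L(u_{[0,T−1]})]. Then for every r with 0 ≤ r ≤ n, the row vector w_r = [ξ A^r, ξ A^{r−1}B, ..., ξ B, η, 0_{(n−r)m}] lies in the left kernel of the deeper matrix [H_1(x_{[0,T−n−L]}); H_{n+L}(u_{[0,T−1]})]. -/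
/-- The stacked matrix `[H_1(x_{[0,T-L]}); H_L(u_{[0,T-1]})]`: the top block has
columns `x(0),...,x(T-L)` and the bottom block is the depth-`L` Hankel matrix of `u`. -/
def stackedXU (n m L T : ℕ) (x : ℕ → Fin n → ℝ) (u : ℕ → Fin m → ℝ) :
    Matrix (Fin n ⊕ Fin L × Fin m) (Fin (T - L + 1)) ℝ :=
  fun r c =>
    Sum.elim (fun i => x (c : ℕ) i) (fun p => u ((p.1 : ℕ) + (c : ℕ)) p.2) r

/-- The row vector `w_r = [ξ A^r, ξ A^{r-1}B, ..., ξ B, η, 0_{(n-r)m}]`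
of width `n + (n+L)m`. -/
def wvec (n m L : ℕ) (A : Matrix (Fin n) (Fin n) ℝ) (B : Matrix (Fin n) (Fin m) ℝ)
    (ξ : Fin n → ℝ) (η : Fin L × Fin m → ℝ) (r : ℕ) :
    Fin n ⊕ Fin (n + L) × Fin m → ℝ :=
  Sum.elim (fun i => Matrix.vecMul ξ (A ^ r) i)
    (fun p =>
      if h1 : (p.1 : ℕ) < r then Matrix.vecMul ξ (A ^ (r - 1 - (p.1 : ℕ)) * B) p.2
      else if h2 : (p.1 : ℕ) < r + L then η (⟨(p.1 : ℕ) - r, by omega⟩, p.2) else 0)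

open Matrix Finset in
private lemma dotProduct_sum' {ι : Type*} {k : ℕ} (v : Fin k → ℝ) (s : Finset ι)
    (w : ι → Fin k → ℝ) : v ⬝ᵥ (∑ i ∈ s, w i) = ∑ i ∈ s, v ⬝ᵥ w i := by
  simp only [dotProduct, Finset.sum_apply, Finset.mul_sum]
  rw [Finset.sum_comm]

open Matrix Finset in
private lemma traj {n m T : ℕ} (A : Matrix (Fin n) (Fin n) ℝ) (B : Matrix (Fin n) (Fin m) ℝ)
    (u : ℕ → Fin m → ℝ) (x : ℕ → Fin n → ℝ)
    (hx : ∀ t, t + 1 < T → x (t + 1) = A.mulVec (x t) + B.mulVec (u t)) :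
    ∀ s t, t + s < T →
      x (t + s) = (A ^ s).mulVec (x t)
        + ∑ k ∈ Finset.range s, ((A ^ (s - 1 - k)) * B).mulVec (u (t + k)) := by
  intro s
  induction s with
  | zero => intro t ht; simp
  | succ s ih =>
    intro t ht
    have h1 : x (t + (s + 1)) = A.mulVec (x (t + s)) + B.mulVec (u (t + s)) := by
      have := hx (t + s) (by omega)
      simpa [Nat.add_assoc] using this
    rw [h1, ih t (by omega), mulVec_add, mulVec_mulVec, ← pow_succ']
    have hms := map_sum A.mulVecLin
      (fun k => ((A ^ (s - 1 - k)) * B).mulVec (u (t + k))) (Finset.range s)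
    simp only [Matrix.mulVecLin_apply] at hms
    rw [hms]
    have hsum : ∑ k ∈ Finset.range s, A.mulVec (((A ^ (s - 1 - k)) * B).mulVec (u (t + k)))
        = ∑ k ∈ Finset.range s, ((A ^ (s + 1 - 1 - k)) * B).mulVec (u (t + k)) := by
      refine Finset.sum_congr rfl fun k hk => ?_
      have hk' := Finset.mem_range.mp hk
      rw [mulVec_mulVec]
      have hp : A * A ^ (s - 1 - k) = A ^ (s + 1 - 1 - k) := by
        rw [← pow_succ']
        congr 1
        omega
      rw [← Matrix.mul_assoc, hp]
    rw [hsum, Finset.sum_range_succ]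
    have hB : ((A ^ (s + 1 - 1 - s)) * B).mulVec (u (t + s)) = B.mulVec (u (t + s)) := by
      simp
    rw [hB]
    abel

/-- If `[ξ η]` lies in the left kernel of `[H_1(x_{[0,T-L]}); H_L(u_{[0,T-1]})]`, where
`(u,x)` is an input/state trajectory of `x(t+1) = Ax(t) + Bu(t)`, then for every
`0 ≤ r ≤ n` the row vector `w_r = [ξ A^r, ξ A^{r-1}B, ..., ξ B, η, 0_{(n-r)m}]`
lies in the left kernel of the deeper matrix `[H_1(x_{[0,T-n-L]}); H_{n+L}(u_{[0,T-1]})]`. -/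
theorem left_kernel_propagation (n m L T : ℕ) (hL : 1 ≤ L) (hT : n + L ≤ T)
    (A : Matrix (Fin n) (Fin n) ℝ) (B : Matrix (Fin n) (Fin m) ℝ)
    (u : ℕ → Fin m → ℝ) (x : ℕ → Fin n → ℝ)
    (hx : ∀ t, t + 1 < T → x (t + 1) = A.mulVec (x t) + B.mulVec (u t))
    (ξ : Fin n → ℝ) (η : Fin L × Fin m → ℝ)
    (hker : Matrix.vecMul (Sum.elim ξ η) (stackedXU n m L T x u) = 0) :
    ∀ r, r ≤ n →
      Matrix.vecMul (wvec n m L A B ξ η r) (stackedXU n m (n + L) T x u) = 0 := by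
  classical
  intro r hr
  funext c
  have hc : (c : ℕ) < T - (n + L) + 1 := c.isLt
  have hcr : (c : ℕ) + r < T - L + 1 := by omega
  have h0 := congrFun hker ⟨(c : ℕ) + r, hcr⟩
  have hxcr := traj A B u x hx r (c : ℕ) (by omega)
  -- the kernel relation at column c + r, in dot-product form
  have h0' : dotProduct ξ (x ((c : ℕ) + r))
      + ∑ p : Fin L, dotProduct (fun j => η (p, j)) (u ((p : ℕ) + ((c : ℕ) + r))) = 0 := by
    simpa [Matrix.vecMul, dotProduct, stackedXU, Fintype.sum_sum_type,
      Fintype.sum_prod_type] using h0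
  -- trajectory formula in dot-product form
  have hA : dotProduct ξ (x ((c : ℕ) + r))
      = dotProduct (Matrix.vecMul ξ (A ^ r)) (x (c : ℕ))
        + ∑ k ∈ Finset.range r,
            dotProduct (Matrix.vecMul ξ (A ^ (r - 1 - k) * B)) (u ((c : ℕ) + k)) := by
    rw [hxcr, dotProduct_add, Matrix.dotProduct_mulVec, dotProduct_sum']
    simp [Matrix.dotProduct_mulVec]
  -- the bottom-block contribution, as a sum over ℕ
  set g : ℕ → ℝ := fun k =>
    if h1 : k < r then dotProduct (Matrix.vecMul ξ (A ^ (r - 1 - k) * B)) (u (k + (c : ℕ)))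
    else if h2 : k < r + L then
      dotProduct (fun j => η (⟨k - r, by omega⟩, j)) (u (k + (c : ℕ)))
    else 0 with hg
  have hgoal : Matrix.vecMul (wvec n m L A B ξ η r) (stackedXU n m (n + L) T x u) c
      = dotProduct (Matrix.vecMul ξ (A ^ r)) (x (c : ℕ))
        + ∑ p : Fin (n + L) × Fin m,
            wvec n m L A B ξ η r (Sum.inr p) * u ((p.1 : ℕ) + (c : ℕ)) p.2 := by
    simp [Matrix.vecMul, dotProduct, stackedXU, wvec, Fintype.sum_sum_type]
  have hbot : (∑ p : Fin (n + L) × Fin m,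
        wvec n m L A B ξ η r (Sum.inr p) * u ((p.1 : ℕ) + (c : ℕ)) p.2)
      = ∑ k ∈ Finset.range (n + L), g k := by
    rw [Fintype.sum_prod_type, ← Fin.sum_univ_eq_sum_range g (n + L)]
    refine Finset.sum_congr rfl fun k _ => ?_
    by_cases h1 : (k : ℕ) < r
    · simp [hg, wvec, h1, dotProduct, Finset.sum_mul]
    · by_cases h2 : (k : ℕ) < r + L
      · simp [hg, wvec, h1, h2, dotProduct]
      · simp [hg, wvec, h1, h2]
  have hsplit : ∑ k ∈ Finset.range (n + L), g k
      = (∑ k ∈ Finset.range r, g k) + ∑ k ∈ Finset.Ico r (r + L), g k := by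
    rw [← Finset.sum_range_add_sum_Ico g (show r + L ≤ n + L by omega),
        ← Finset.sum_range_add_sum_Ico g (show r ≤ r + L by omega)]
    have hz : ∑ k ∈ Finset.Ico (r + L) (n + L), g k = 0 := by
      refine Finset.sum_eq_zero fun k hk => ?_
      rcases Finset.mem_Ico.mp hk with ⟨hk1, _⟩
      simp only [hg]
      rw [dif_neg (by omega), dif_neg (by omega)]
    rw [hz, add_zero]
  have hfirst : ∑ k ∈ Finset.range r, g k
      = ∑ k ∈ Finset.range r,
          dotProduct (Matrix.vecMul ξ (A ^ (r - 1 - k) * B)) (u ((c : ℕ) + k)) := by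
    refine Finset.sum_congr rfl fun k hk => ?_
    have hk' : k < r := Finset.mem_range.mp hk
    simp only [hg]
    rw [dif_pos hk', Nat.add_comm k (c : ℕ)]
  have hsecond : ∑ k ∈ Finset.Ico r (r + L), g k
      = ∑ p : Fin L, dotProduct (fun j => η (p, j)) (u ((p : ℕ) + ((c : ℕ) + r))) := by
    rw [Finset.sum_Ico_eq_sum_range]
    simp only [Nat.add_sub_cancel_left]
    have hR : (∑ p : Fin L, dotProduct (fun j => η (p, j)) (u ((p : ℕ) + ((c : ℕ) + r))))
        = ∑ k ∈ Finset.range L,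
            if h : k < L then
              dotProduct (fun j => η (⟨k, h⟩, j)) (u (k + ((c : ℕ) + r))) else 0 := by
      rw [← Fin.sum_univ_eq_sum_range (fun k =>
        if h : k < L then
          dotProduct (fun j => η (⟨k, h⟩, j)) (u (k + ((c : ℕ) + r))) else 0) L]
      exact Finset.sum_congr rfl fun p _ => by simp [p.isLt]
    rw [hR]
    refine Finset.sum_congr rfl fun k hk => ?_
    have hkL : k < L := Finset.mem_range.mp hk
    simp only [hg]
    rw [dif_neg (by omega), dif_pos (by omega), dif_pos hkL]
    have harg : r + k + (c : ℕ) = k + ((c : ℕ) + r) := by omega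
    simp [harg, Nat.add_sub_cancel_left]
  have hz : Matrix.vecMul (wvec n m L A B ξ η r) (stackedXU n m (n + L) T x u) c = 0 := by
    rw [hgoal, hbot, hsplit, hfirst, hsecond, ← add_assoc, ← hA]
    exact h0'
  simpa using hz
end

section
/- Suppose w_0, ..., w_n ∈ ℝ^{1×(n+(n+L)m)} have the structure w_r = [ξ A^r, ξ A^{r−1}B, ..., ξ B, η, 0_{(n−r)m}] for a fixed ξ ∈ ℝ^{1×n}, η = [η_1, ..., η_L] ∈ ℝ^{1×mL}. If w_0, ..., w_n are linearly dependent over ℝ, then η = 0. -/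
/-- If the `n+1` structured row vectors `w_0, ..., w_n` (with
`w_r = [ξ A^r, ξ A^{r-1}B, ..., ξ B, η, 0_{(n-r)m}]`) are linearly dependent
over `ℝ`, then `η = 0`. -/
theorem dependent_wvecs_eta_zero (n m L : ℕ)
    (A : Matrix (Fin n) (Fin n) ℝ) (B : Matrix (Fin n) (Fin m) ℝ)
    (ξ : Fin n → ℝ) (η : Fin L × Fin m → ℝ)
    (hdep : ¬ LinearIndependent ℝ (fun r : Fin (n + 1) => wvec n m L A B ξ η (r : ℕ))) :
    η = 0 := by
  rw [Fintype.not_linearIndependent_iff] at hdep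
  obtain ⟨g, hsum, i, hgi⟩ := hdep
  classical
  set S : Finset (Fin (n + 1)) := Finset.univ.filter (fun r => g r ≠ 0) with hS
  have hSne : S.Nonempty := ⟨i, by simp [hS, hgi]⟩
  set s : Fin (n + 1) := S.max' hSne with hs
  have hgs : g s ≠ 0 := by
    have := S.max'_mem hSne
    simpa [hS] using this
  have hmax : ∀ r : Fin (n + 1), g r ≠ 0 → r ≤ s := by
    intro r hr
    exact S.le_max' r (by simp [hS, hr])
  -- key step : if all later blocks of η vanish, so does block u
  have key : ∀ u : Fin L, (∀ v : Fin L, u < v → ∀ j, η (v, j) = 0) →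
      ∀ j, η (u, j) = 0 := by
    intro u hz j
    have hk : (s : ℕ) + (u : ℕ) < n + L := by
      have := s.isLt; have := u.isLt; omega
    have hpt := congrFun hsum (Sum.inr (⟨⟨(s : ℕ) + (u : ℕ), hk⟩, j⟩))
    simp only [Finset.sum_apply, Pi.smul_apply, smul_eq_mul, Pi.zero_apply] at hpt
    rw [Finset.sum_eq_single s] at hpt
    · -- term at s equals g s * η (u, j)
      have hval : wvec n m L A B ξ η (s : ℕ) (Sum.inr (⟨⟨(s : ℕ) + (u : ℕ), hk⟩, j⟩))
          = η (u, j) := by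
        simp only [wvec, Sum.elim_inr]
        rw [dif_neg (by omega), dif_pos (by omega : (s : ℕ) + (u : ℕ) < (s : ℕ) + L)]
        have heq : (⟨(s : ℕ) + (u : ℕ) - (s : ℕ), by omega⟩ : Fin L) = u := by
          apply Fin.ext; simp only [Fin.val_mk]; omega
        rw [heq]
      rw [hval] at hpt
      exact (mul_eq_zero.mp hpt).resolve_left hgs
    · intro r _ hrs
      by_cases hgr : g r = 0
      · simp [hgr]
      · have hrle : r ≤ s := hmax r hgr
        have hrlt : (r : ℕ) < (s : ℕ) := Fin.lt_def.mp (lt_of_le_of_ne hrle hrs)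
        have hval : wvec n m L A B ξ η (r : ℕ) (Sum.inr (⟨⟨(s : ℕ) + (u : ℕ), hk⟩, j⟩))
            = 0 := by
          simp only [wvec, Sum.elim_inr]
          rw [dif_neg (by omega)]
          by_cases h2 : (s : ℕ) + (u : ℕ) < (r : ℕ) + L
          · rw [dif_pos h2]
            apply hz
            simp only [Fin.lt_def]
            omega
          · rw [dif_neg h2]
        rw [hval, mul_zero]
    · intro h; exact absurd (Finset.mem_univ s) h
  -- downward induction on u
  have main : ∀ t : ℕ, ∀ u : Fin L, L - 1 - (u : ℕ) = t → ∀ j, η (u, j) = 0 := by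
    intro t
    induction t using Nat.strong_induction_on with
    | _ t ih =>
      intro u hu j
      refine key u (fun v hv j' => ?_) j
      have hvlt : (u : ℕ) < (v : ℕ) := hv
      exact ih (L - 1 - (v : ℕ)) (by have := v.isLt; omega) v rfl j'
  funext p
  obtain ⟨u, j⟩ := p
  exact main (L - 1 - (u : ℕ)) u rfl j
end

section
/- (Willems' fundamental lemma, parameterization, 'if' direction given the rank condition.) Consider the system x(t+1)=Ax(t)+Bu(t), y(t)=Cx(t)+Du(t) and a trajectory (u, x, y) on {0,...,T−1}. If the matrix [H_1(x_{[0,T−L]}); H_L(u_{[0,T−1]})] has full row rank, then for every length-L input/output trajectory (ū, ȳ) of the system there exists a vector g ∈ ℝ^{T−L+1} such that [ū; ȳ] = [H_L(u); H_L(y)] g. -/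
/-- Willems' fundamental lemma, parameterization ('if' direction given the rank
condition): if `[H_1(x_{[0,T-L]}); H_L(u_{[0,T-1]})]` has full row rank, then every
length-`L` input/output trajectory `(ū, ȳ)` of the system is a linear combination,
with some coefficient vector `g`, of the columns of `[H_L(u); H_L(y)]`. -/
theorem willems_parameterization (n m p L T : ℕ) (hL : 1 ≤ L) (hLT : L ≤ T)
    (A : Matrix (Fin n) (Fin n) ℝ) (B : Matrix (Fin n) (Fin m) ℝ)
    (C : Matrix (Fin p) (Fin n) ℝ) (D : Matrix (Fin p) (Fin m) ℝ)
    (u : ℕ → Fin m → ℝ) (x : ℕ → Fin n → ℝ) (y : ℕ → Fin p → ℝ)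
    (hx : ∀ t, t + 1 < T → x (t + 1) = A.mulVec (x t) + B.mulVec (u t))
    (hy : ∀ t, t < T → y t = C.mulVec (x t) + D.mulVec (u t))
    (hrank : (stackedXU n m L T x u).rank = n + L * m)
    (ubar : ℕ → Fin m → ℝ) (ybar : ℕ → Fin p → ℝ)
    (htraj : ∃ xbar : ℕ → Fin n → ℝ,
      (∀ t, t + 1 < L → xbar (t + 1) = A.mulVec (xbar t) + B.mulVec (ubar t)) ∧
      (∀ t, t < L → ybar t = C.mulVec (xbar t) + D.mulVec (ubar t))) :
    ∃ g : Fin (T - L + 1) → ℝ,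
      (∀ t, t < L → ∀ r, ubar t r = ∑ j : Fin (T - L + 1), g j * u (t + (j : ℕ)) r) ∧
      (∀ t, t < L → ∀ r, ybar t r = ∑ j : Fin (T - L + 1), g j * y (t + (j : ℕ)) r) := by
  obtain ⟨xbar, hxbar, hybar⟩ := htraj
  -- surjectivity from rank
  have hsurj : Function.Surjective (stackedXU n m L T x u).mulVec := by
    have htop : LinearMap.range (stackedXU n m L T x u).mulVecLin = ⊤ := by
      apply Submodule.eq_top_of_finrank_eq
      rw [← Matrix.rank, hrank]
      simp [Module.finrank_fintype_fun_eq_card]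
    intro v
    have := htop ▸ Submodule.mem_top (x := v) (R := ℝ)
    obtain ⟨g, hg⟩ := this
    exact ⟨g, hg⟩
  obtain ⟨g, hg⟩ := hsurj (Sum.elim (xbar 0) (fun q => ubar (q.1 : ℕ) q.2))
  have hjle : ∀ j : Fin (T - L + 1), (j : ℕ) ≤ T - L := fun j => Nat.lt_succ_iff.mp j.2
  -- input relation
  have hu : ∀ t, t < L → ∀ r, ubar t r = ∑ j : Fin (T - L + 1), g j * u (t + (j : ℕ)) r := by
    intro t ht r
    have := congrFun hg (Sum.inr (⟨t, ht⟩, r))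
    simp only [Matrix.mulVec, dotProduct, stackedXU, Sum.elim_inr] at this
    rw [← this]
    exact Finset.sum_congr rfl (fun j _ => mul_comm _ _)
  -- state relation
  have hxg : ∀ t, t < L → ∀ i, xbar t i = ∑ j : Fin (T - L + 1), g j * x (t + (j : ℕ)) i := by
    intro t
    induction t with
    | zero =>
      intro _ i
      have := congrFun hg (Sum.inl i)
      simp only [Matrix.mulVec, dotProduct, stackedXU, Sum.elim_inl] at this
      rw [← this]
      exact Finset.sum_congr rfl (fun j _ => by rw [mul_comm, Nat.zero_add])
    | succ t ih =>
      intro ht i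
      have ht' : t < L := Nat.lt_of_succ_lt ht
      rw [hxbar t ht]
      have hstep : ∀ j : Fin (T - L + 1), x (t + 1 + (j : ℕ)) = A.mulVec (x (t + (j:ℕ))) + B.mulVec (u (t + (j:ℕ))) := by
        intro j
        have h1 : t + (j : ℕ) + 1 < T := by
          have := hjle j
          omega
        have := hx (t + (j:ℕ)) h1
        rw [show t + 1 + (j:ℕ) = t + (j:ℕ) + 1 by ring]
        exact this
      have hxt := ih ht'
      have hut := hu t ht'
      show (A.mulVec (xbar t)) i + (B.mulVec (ubar t)) i = _
      simp only [Matrix.mulVec, dotProduct]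
      calc ∑ k, A i k * xbar t k + ∑ r, B i r * ubar t r
          = ∑ k, A i k * (∑ j : Fin (T-L+1), g j * x (t + (j:ℕ)) k)
            + ∑ r, B i r * (∑ j : Fin (T-L+1), g j * u (t + (j:ℕ)) r) := by
            congr 1
            · exact Finset.sum_congr rfl (fun k _ => by rw [hxt k])
            · exact Finset.sum_congr rfl (fun r _ => by rw [hut r])
        _ = ∑ j : Fin (T-L+1), g j * (∑ k, A i k * x (t + (j:ℕ)) k + ∑ r, B i r * u (t + (j:ℕ)) r) := by
            simp only [Finset.mul_sum, mul_add]
            rw [Finset.sum_add_distrib, Finset.sum_comm, Finset.sum_comm (γ := Fin m)]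
            congr 1 <;> exact Finset.sum_congr rfl (fun j _ => Finset.sum_congr rfl (fun k _ => by ring))
        _ = ∑ j : Fin (T-L+1), g j * x (t + 1 + (j:ℕ)) i := by
            refine Finset.sum_congr rfl (fun j _ => ?_)
            rw [hstep j]
            simp [Matrix.mulVec, dotProduct]
  refine ⟨g, hu, ?_⟩
  intro t ht r
  rw [hybar t ht]
  have hyj : ∀ j : Fin (T - L + 1), y (t + (j:ℕ)) = C.mulVec (x (t + (j:ℕ))) + D.mulVec (u (t + (j:ℕ))) := by
    intro j
    apply hy
    have := hjle j
    omega
  show (C.mulVec (xbar t)) r + (D.mulVec (ubar t)) r = _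
  simp only [Matrix.mulVec, dotProduct]
  calc ∑ k, C r k * xbar t k + ∑ s, D r s * ubar t s
      = ∑ k, C r k * (∑ j : Fin (T-L+1), g j * x (t + (j:ℕ)) k)
        + ∑ s, D r s * (∑ j : Fin (T-L+1), g j * u (t + (j:ℕ)) s) := by
        congr 1
        · exact Finset.sum_congr rfl (fun k _ => by rw [hxg t ht k])
        · exact Finset.sum_congr rfl (fun s _ => by rw [hu t ht s])
    _ = ∑ j : Fin (T-L+1), g j * (∑ k, C r k * x (t + (j:ℕ)) k + ∑ s, D r s * u (t + (j:ℕ)) s) := by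
        simp only [Finset.mul_sum, mul_add]
        rw [Finset.sum_add_distrib, Finset.sum_comm, Finset.sum_comm (γ := Fin m)]
        congr 1 <;> exact Finset.sum_congr rfl (fun j _ => Finset.sum_congr rfl (fun k _ => by ring))
    _ = ∑ j : Fin (T-L+1), g j * y (t + (j:ℕ)) r := by
        refine Finset.sum_congr rfl (fun j _ => ?_)
        rw [hyj j]
        simp [Matrix.mulVec, dotProduct]
end

section
/- For the LTI system (A,B,C,D), and any input/state/output trajectory (u, x, y) on {0,...,T−1}, the matrix identity [[0, I]; [O_L, T_L]] · [H_1(x_{[0,T−L]}); H_L(u_{[0,T−1]})] = [H_L(u_{[0,T−1]}); H_L(y_{[0,T−1]})] holds, where O_L is the observability matrix and T_L the block Toeplitz matrix of Markov parameters. -/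
/-- The block matrix `[[0, I]; [O_L, T_L]]` (observability matrix and block Toeplitz
matrix of Markov parameters). -/
def bigM (n m p L : ℕ)
    (A : Matrix (Fin n) (Fin n) ℝ) (B : Matrix (Fin n) (Fin m) ℝ)
    (C : Matrix (Fin p) (Fin n) ℝ) (D : Matrix (Fin p) (Fin m) ℝ) :
    Matrix ((Fin L × Fin m) ⊕ (Fin L × Fin p)) (Fin n ⊕ Fin L × Fin m) ℝ :=
  fun r c =>
    match r, c with
    | Sum.inl _, Sum.inl _ => 0
    | Sum.inl pr, Sum.inr qr => if pr = qr then 1 else 0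
    | Sum.inr pr, Sum.inl i => (C * A ^ (pr.1 : ℕ)) pr.2 i
    | Sum.inr pr, Sum.inr qr =>
        if (qr.1 : ℕ) = (pr.1 : ℕ) then D pr.2 qr.2
        else if (qr.1 : ℕ) < (pr.1 : ℕ) then
          (C * A ^ ((pr.1 : ℕ) - (qr.1 : ℕ) - 1) * B) pr.2 qr.2
        else 0

/-- The stacked input/output Hankel matrix `[H_L(u_{[0,T-1]}); H_L(y_{[0,T-1]})]`. -/
def stackedUY (m p L T : ℕ) (u : ℕ → Fin m → ℝ) (y : ℕ → Fin p → ℝ) :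
    Matrix ((Fin L × Fin m) ⊕ (Fin L × Fin p)) (Fin (T - L + 1)) ℝ :=
  fun r c =>
    Sum.elim (fun pr => u ((pr.1 : ℕ) + (c : ℕ)) pr.2)
      (fun pr => y ((pr.1 : ℕ) + (c : ℕ)) pr.2) r

lemma xform (n m T : ℕ)
    (A : Matrix (Fin n) (Fin n) ℝ) (B : Matrix (Fin n) (Fin m) ℝ)
    (u : ℕ → Fin m → ℝ) (x : ℕ → Fin n → ℝ)
    (hx : ∀ t, t + 1 < T → x (t + 1) = A.mulVec (x t) + B.mulVec (u t)) :
    ∀ k c, k + c < T →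
      x (k + c) = (A ^ k).mulVec (x c) +
        ∑ j ∈ Finset.range k, ((A ^ (k - 1 - j)) * B).mulVec (u (j + c)) := by
  intro k
  induction k with
  | zero =>
    intro c _
    simp
  | succ k ih =>
    intro c hc
    have h1 : k + c + 1 < T := by omega
    have hrec := hx (k + c) h1
    have he : k + 1 + c = k + c + 1 := by omega
    rw [he, hrec, ih c (by omega), Matrix.mulVec_add, Finset.sum_range_succ]
    have hsum : A.mulVec (∑ j ∈ Finset.range k, ((A ^ (k - 1 - j)) * B).mulVec (u (j + c)))
        = ∑ j ∈ Finset.range k, ((A ^ (k + 1 - 1 - j)) * B).mulVec (u (j + c)) := by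
      rw [show A.mulVec = A.mulVecLin from rfl, map_sum]
      refine Finset.sum_congr rfl fun j hj => ?_
      simp only [Finset.mem_range] at hj
      rw [Matrix.mulVecLin_apply, Matrix.mulVec_mulVec, ← Matrix.mul_assoc, ← pow_succ',
        show k - 1 - j + 1 = k + 1 - 1 - j from by omega]
    rw [hsum, Matrix.mulVec_mulVec, ← pow_succ']
    simp only [Nat.add_sub_cancel, Nat.sub_self, pow_zero, one_mul, Matrix.one_mul]
    abel

/-- For any input/state/output trajectory `(u, x, y)` on `{0,...,T-1}`, the identity
`[[0, I]; [O_L, T_L]] · [H_1(x_{[0,T-L]}); H_L(u_{[0,T-1]})] = [H_L(u); H_L(y)]` holds. -/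
theorem bigM_mul_stackedXU (n m p L T : ℕ) (hL : 1 ≤ L) (hLT : L ≤ T)
    (A : Matrix (Fin n) (Fin n) ℝ) (B : Matrix (Fin n) (Fin m) ℝ)
    (C : Matrix (Fin p) (Fin n) ℝ) (D : Matrix (Fin p) (Fin m) ℝ)
    (u : ℕ → Fin m → ℝ) (x : ℕ → Fin n → ℝ) (y : ℕ → Fin p → ℝ)
    (hx : ∀ t, t + 1 < T → x (t + 1) = A.mulVec (x t) + B.mulVec (u t))
    (hy : ∀ t, t < T → y t = C.mulVec (x t) + D.mulVec (u t)) :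
    bigM n m p L A B C D * stackedXU n m L T x u = stackedUY m p L T u y := by
  have hTc : ∀ c : Fin (T - L + 1), (c : ℕ) ≤ T - L := fun c => by
    have := c.isLt; omega
  ext r c
  rcases r with pr | pr
  · simp only [Matrix.mul_apply, Fintype.sum_sum_type, bigM, stackedXU, stackedUY,
      Sum.elim_inl, Sum.elim_inr, zero_mul, Finset.sum_const_zero, ite_mul, one_mul,
      zero_add]
    rw [Finset.sum_ite_eq Finset.univ pr (fun q => u ((q.1 : ℕ) + (c : ℕ)) q.2)]
    simp
  · obtain ⟨kf, p2⟩ := pr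
    set k := (kf : ℕ) with hkdef
    have hk : k < L := kf.isLt
    have hkc : k + (c : ℕ) < T := by have := hTc c; omega
    rw [Matrix.mul_apply]
    simp only [Fintype.sum_sum_type, bigM, stackedXU, stackedUY, Sum.elim_inl, Sum.elim_inr]
    have hx2 : C.mulVec (x (k + (c : ℕ)))
        = (C * A ^ k).mulVec (x (c : ℕ))
          + ∑ j ∈ Finset.range k, (C * A ^ (k - 1 - j) * B).mulVec (u (j + (c : ℕ))) := by
      rw [xform n m T A B u x hx k (c : ℕ) hkc, Matrix.mulVec_add,
        show C.mulVec = C.mulVecLin from rfl, map_sum]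
      simp only [Matrix.mulVecLin_apply, Matrix.mulVec_mulVec, ← Matrix.mul_assoc]
    rw [hy (k + (c : ℕ)) hkc]
    -- RHS now expanded
    have hfirst : ∑ i, (C * A ^ k) p2 i * x (c : ℕ) i = ((C * A ^ k).mulVec (x (c : ℕ))) p2 := rfl
    rw [hfirst]
    -- handle the second sum
    have hsecond :
        ∑ q : Fin L × Fin m,
          (if (q.1 : ℕ) = k then D p2 q.2
           else if (q.1 : ℕ) < k then (C * A ^ (k - (q.1 : ℕ) - 1) * B) p2 q.2 else 0)
            * u ((q.1 : ℕ) + (c : ℕ)) q.2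
        = ∑ j ∈ Finset.range L,
            (if j = k then (D.mulVec (u (j + (c : ℕ)))) p2
             else if j < k then ((C * A ^ (k - j - 1) * B).mulVec (u (j + (c : ℕ)))) p2
             else 0) := by
      rw [Fintype.sum_prod_type]
      rw [← Fin.sum_univ_eq_sum_range (fun j =>
            (if j = k then (D.mulVec (u (j + (c : ℕ)))) p2
             else if j < k then ((C * A ^ (k - j - 1) * B).mulVec (u (j + (c : ℕ)))) p2
             else 0)) L]
      refine Finset.sum_congr rfl fun q1 _ => ?_
      by_cases h1 : (q1 : ℕ) = k
      · simp only [h1, if_pos rfl, Matrix.mulVec]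
        rfl
      · by_cases h2 : (q1 : ℕ) < k
        · simp only [h1, h2, if_neg, if_pos, Matrix.mulVec]
          rfl
        · simp [h1, h2]
    rw [hsecond]
    have hcut : ∑ j ∈ Finset.range L,
            (if j = k then (D.mulVec (u (j + (c : ℕ)))) p2
             else if j < k then ((C * A ^ (k - j - 1) * B).mulVec (u (j + (c : ℕ)))) p2
             else 0)
        = (D.mulVec (u (k + (c : ℕ)))) p2
          + ∑ j ∈ Finset.range k, ((C * A ^ (k - j - 1) * B).mulVec (u (j + (c : ℕ)))) p2 := by
      rw [← Finset.sum_subset (Finset.range_subset_range.mpr (show k + 1 ≤ L from hk))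
        (fun j _ hj2 => by
          simp only [Finset.mem_range, not_lt] at hj2
          rw [if_neg (by omega), if_neg (by omega)]),
        Finset.sum_range_succ, if_pos rfl, add_comm]
      congr 1
      refine Finset.sum_congr rfl fun j hj => ?_
      simp only [Finset.mem_range] at hj
      rw [if_neg (by omega), if_pos hj]
    rw [hcut, hx2]
    simp only [Pi.add_apply, Finset.sum_apply]
    have : ∀ j ∈ Finset.range k, ((C * A ^ (k - 1 - j) * B).mulVec (u (j + (c : ℕ)))) p2
        = ((C * A ^ (k - j - 1) * B).mulVec (u (j + (c : ℕ)))) p2 := fun j hj => by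
      rw [show k - 1 - j = k - j - 1 from by omega]
    rw [Finset.sum_congr rfl this]
    ring
end
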